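/- Let A, B, C be pairwise disjoint finite sets, E_AB ⊆ A × B, E_BC ⊆ B × C, and let v ↦ v̄ be an injective map from A ∪ B ∪ C into (0, 0.1]. Let K be the graph whose vertices are the elements of the disjoint union A ⊔ E_AB ⊔ E_BC ⊔ C, where two vertices are adjacent iff their associated hypercubes intersect: vertex a ∈ A has cube □(s_ā); vertex (a,b) ∈ E_AB has cube □(p_{ā,b̄}); vertex (b,c) ∈ E_BC has cube □(q_{b̄,c̄}); vertex c ∈ C has cube □(t_c̄). Then every pair of vertices of K is at graph distance at most 3 if and only if for every a ∈ A and every c ∈ C there exists b ∈ B with (a,b) ∈ E_AB and (b,c) ∈ E_BC. -/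

import Mathlib

noncomputable section

/-- The closed axis-parallel hypercube of side length 1 centered at `p ∈ ℝ⁴`. -/
def cube (p : Fin 4 → ℝ) : Set (Fin 4 → ℝ) :=
  {x | ∀ i, |x i - p i| ≤ 1 / 2}

/-- Center `s_a = (a, −a, 0, 0)`. -/
def sC (a : ℝ) : Fin 4 → ℝ := ![a, -a, 0, 0]

/-- Center `p_{a,b} = (1+a, 1−a, 0.5+b, 0.5−b)`. -/
def pC (a b : ℝ) : Fin 4 → ℝ := ![1 + a, 1 - a, 0.5 + b, 0.5 - b]

/-- Center `q_{b,c} = (1+c, 1−c, 1.5+b, 1.5−b)`. -/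
def qC (b c : ℝ) : Fin 4 → ℝ := ![1 + c, 1 - c, 1.5 + b, 1.5 - b]

/-- Center `t_c = (c, −c, 2, 2)`. -/
def tC (c : ℝ) : Fin 4 → ℝ := ![c, -c, 2, 2]

variable {A B C : Type*}

/-- The hypercube center associated to each vertex of the disjoint union
`A ⊔ E_AB ⊔ E_BC ⊔ C`, where vertices in `A` get `□(s_ā)`, edges `(a,b) ∈ E_AB`
get `□(p_{ā,b̄})`, edges `(b,c) ∈ E_BC` get `□(q_{b̄,c̄})`, and vertices in `C`
get `□(t_c̄)`. -/
def vertexCenter (EAB : Set (A × B)) (EBC : Set (B × C))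
    (la : A → ℝ) (lb : B → ℝ) (lc : C → ℝ) :
    A ⊕ ({e // e ∈ EAB} ⊕ ({e // e ∈ EBC} ⊕ C)) → Fin 4 → ℝ
  | .inl a => sC (la a)
  | .inr (.inl e) => pC (la e.1.1) (lb e.1.2)
  | .inr (.inr (.inl e)) => qC (lb e.1.1) (lc e.1.2)
  | .inr (.inr (.inr c)) => tC (lc c)

/-- The graph `K` on the disjoint union `A ⊔ E_AB ⊔ E_BC ⊔ C`, where two distinct
vertices are adjacent iff their associated unit hypercubes intersect. -/
def K (EAB : Set (A × B)) (EBC : Set (B × C))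
    (la : A → ℝ) (lb : B → ℝ) (lc : C → ℝ) :
    SimpleGraph (A ⊕ ({e // e ∈ EAB} ⊕ ({e // e ∈ EBC} ⊕ C))) :=
  SimpleGraph.fromRel fun u v =>
    (cube (vertexCenter EAB EBC la lb lc u) ∩ cube (vertexCenter EAB EBC la lb lc v)).Nonempty


lemma forall_fin4 {P : Fin 4 → Prop} : (∀ i, P i) ↔ P 0 ∧ P 1 ∧ P 2 ∧ P 3 :=
  ⟨fun h => ⟨h 0, h 1, h 2, h 3⟩, by rintro ⟨h0, h1, h2, h3⟩ i; fin_cases i <;> assumption⟩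

lemma cube_inter_iff (p q : Fin 4 → ℝ) :
    (cube p ∩ cube q).Nonempty ↔ ∀ i, |p i - q i| ≤ 1 := by
  constructor
  · rintro ⟨x, hxp, hxq⟩ i
    have h1 := hxp i
    have h2 := hxq i
    have h3 : |p i - q i| ≤ |p i - x i| + |x i - q i| := abs_sub_le _ _ _
    rw [abs_sub_comm (p i) (x i)] at h3
    linarith
  · intro h
    refine ⟨fun i => (p i + q i) / 2, fun i => ?_, fun i => ?_⟩ <;>
    · have hi := h i
      rw [abs_le] at hi ⊢
      constructor <;> linarith [hi.1, hi.2]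

section numeric
variable {x y z w : ℝ}

local notation "I01" => Set.Ioc (0:ℝ) 0.1

lemma ss_le (hx : x ∈ I01) (hy : y ∈ I01) : ∀ i, |sC x i - sC y i| ≤ 1 := by
  obtain ⟨hx1, hx2⟩ := hx; obtain ⟨hy1, hy2⟩ := hy
  rw [forall_fin4]
  simp only [sC, Matrix.cons_val_zero, Matrix.cons_val_one, Matrix.head_cons,
    Matrix.cons_val_two, Matrix.tail_cons, Matrix.cons_val_three]
  norm_num [abs_le]
  repeat' constructor
  all_goals linarith

lemma sp_le (hx : x ∈ I01) (hz : z ∈ I01) : ∀ i, |sC x i - pC x z i| ≤ 1 := by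
  obtain ⟨hx1, hx2⟩ := hx; obtain ⟨hz1, hz2⟩ := hz
  rw [forall_fin4]
  simp only [sC, pC, Matrix.cons_val_zero, Matrix.cons_val_one, Matrix.head_cons,
    Matrix.cons_val_two, Matrix.tail_cons, Matrix.cons_val_three]
  norm_num [abs_le]
  repeat' constructor
  all_goals linarith

lemma pp_le (hx : x ∈ I01) (hy : y ∈ I01) (hz : z ∈ I01) (hw : w ∈ I01) :
    ∀ i, |pC x z i - pC y w i| ≤ 1 := by
  obtain ⟨hx1, hx2⟩ := hx; obtain ⟨hy1, hy2⟩ := hy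
  obtain ⟨hz1, hz2⟩ := hz; obtain ⟨hw1, hw2⟩ := hw
  rw [forall_fin4]
  simp only [pC, Matrix.cons_val_zero, Matrix.cons_val_one, Matrix.head_cons,
    Matrix.cons_val_two, Matrix.tail_cons, Matrix.cons_val_three]
  norm_num [abs_le]
  repeat' constructor
  all_goals linarith

lemma pq_le (hx : x ∈ I01) (hy : y ∈ I01) (hz : z ∈ I01) :
    ∀ i, |pC x z i - qC z y i| ≤ 1 := by
  obtain ⟨hx1, hx2⟩ := hx; obtain ⟨hy1, hy2⟩ := hy; obtain ⟨hz1, hz2⟩ := hz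
  rw [forall_fin4]
  simp only [pC, qC, Matrix.cons_val_zero, Matrix.cons_val_one, Matrix.head_cons,
    Matrix.cons_val_two, Matrix.tail_cons, Matrix.cons_val_three]
  norm_num [abs_le]
  repeat' constructor
  all_goals linarith

lemma qq_le (hx : x ∈ I01) (hy : y ∈ I01) (hz : z ∈ I01) (hw : w ∈ I01) :
    ∀ i, |qC x z i - qC y w i| ≤ 1 := by
  obtain ⟨hx1, hx2⟩ := hx; obtain ⟨hy1, hy2⟩ := hy
  obtain ⟨hz1, hz2⟩ := hz; obtain ⟨hw1, hw2⟩ := hw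
  rw [forall_fin4]
  simp only [qC, Matrix.cons_val_zero, Matrix.cons_val_one, Matrix.head_cons,
    Matrix.cons_val_two, Matrix.tail_cons, Matrix.cons_val_three]
  norm_num [abs_le]
  repeat' constructor
  all_goals linarith

lemma qt_le (hz : z ∈ I01) (hx : x ∈ I01) : ∀ i, |qC z x i - tC x i| ≤ 1 := by
  obtain ⟨hz1, hz2⟩ := hz; obtain ⟨hx1, hx2⟩ := hx
  rw [forall_fin4]
  simp only [qC, tC, Matrix.cons_val_zero, Matrix.cons_val_one, Matrix.head_cons,
    Matrix.cons_val_two, Matrix.tail_cons, Matrix.cons_val_three]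
  norm_num [abs_le]
  repeat' constructor
  all_goals linarith

lemma tt_le (hx : x ∈ I01) (hy : y ∈ I01) : ∀ i, |tC x i - tC y i| ≤ 1 := by
  obtain ⟨hx1, hx2⟩ := hx; obtain ⟨hy1, hy2⟩ := hy
  rw [forall_fin4]
  simp only [tC, Matrix.cons_val_zero, Matrix.cons_val_one, Matrix.head_cons,
    Matrix.cons_val_two, Matrix.tail_cons, Matrix.cons_val_three]
  norm_num [abs_le]
  repeat' constructor
  all_goals linarith

lemma sp_eq (h : ∀ i, |sC x i - pC y z i| ≤ 1) : x = y := by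
  have h0 := h 0; have h1 := h 1
  simp only [sC, pC, Matrix.cons_val_zero, Matrix.cons_val_one, Matrix.head_cons] at h0 h1
  rw [abs_le] at h0 h1
  linarith [h0.1, h0.2, h1.1, h1.2]

lemma pq_eq (h : ∀ i, |pC x z i - qC w y i| ≤ 1) : z = w := by
  have h2 := h 2; have h3 := h 3
  simp only [pC, qC, Matrix.cons_val_two, Matrix.tail_cons, Matrix.head_cons,
    Matrix.cons_val_three] at h2 h3
  rw [abs_le] at h2 h3
  linarith [h2.1, h2.2, h3.1, h3.2]

lemma qt_eq (h : ∀ i, |qC z x i - tC y i| ≤ 1) : x = y := by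
  have h0 := h 0; have h1 := h 1
  simp only [qC, tC, Matrix.cons_val_zero, Matrix.cons_val_one, Matrix.head_cons] at h0 h1
  rw [abs_le] at h0 h1
  linarith [h0.1, h0.2, h1.1, h1.2]

lemma sq_false (hz : z ∈ I01) (h : ∀ i, |sC x i - qC z y i| ≤ 1) : False := by
  have h2 := h 2
  simp only [sC, qC, Matrix.cons_val_two, Matrix.tail_cons, Matrix.head_cons] at h2
  rw [abs_le] at h2
  have := hz.1
  linarith [h2.1, h2.2]

lemma st_false (h : ∀ i, |sC x i - tC y i| ≤ 1) : False := by
  have h2 := h 2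
  simp only [sC, tC, Matrix.cons_val_two, Matrix.tail_cons, Matrix.head_cons] at h2
  rw [abs_le] at h2
  norm_num at h2

lemma pt_false (hz : z ∈ I01) (h : ∀ i, |pC x z i - tC y i| ≤ 1) : False := by
  have h2 := h 2
  simp only [pC, tC, Matrix.cons_val_two, Matrix.tail_cons, Matrix.head_cons] at h2
  rw [abs_le] at h2
  have := hz.2
  norm_num at h2 hz
  linarith [h2.1, h2.2]

end numeric


open SimpleGraph in
theorem stmt5 [Fintype A] [Fintype B] [Fintype C]
    (EAB : Set (A × B)) (EBC : Set (B × C))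
    (la : A → ℝ) (lb : B → ℝ) (lc : C → ℝ)
    (hinj : Function.Injective (Sum.elim la (Sum.elim lb lc)))
    (hrange : ∀ x : A ⊕ (B ⊕ C), Sum.elim la (Sum.elim lb lc) x ∈ Set.Ioc (0 : ℝ) 0.1) :
    (∀ u v, (K EAB EBC la lb lc).edist u v ≤ 3) ↔
      ∀ a : A, ∀ c : C, ∃ b : B, (a, b) ∈ EAB ∧ (b, c) ∈ EBC := by
  set G := K EAB EBC la lb lc with hG
  set vc := vertexCenter EAB EBC la lb lc with hvc
  have hla : ∀ a, la a ∈ Set.Ioc (0:ℝ) 0.1 := fun a => hrange (.inl a)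
  have hlb : ∀ b, lb b ∈ Set.Ioc (0:ℝ) 0.1 := fun b => hrange (.inr (.inl b))
  have hlc : ∀ c, lc c ∈ Set.Ioc (0:ℝ) 0.1 := fun c => hrange (.inr (.inr c))
  have hina : ∀ {a a' : A}, la a = la a' → a = a' := fun h =>
    Sum.inl.inj (hinj (a₁ := Sum.inl _) (a₂ := Sum.inl _) h)
  have hinb : ∀ {b b' : B}, lb b = lb b' → b = b' := fun h => by
    have := hinj (a₁ := Sum.inr (Sum.inl _)) (a₂ := Sum.inr (Sum.inl _)) h
    simpa using this
  have hinc : ∀ {c c' : C}, lc c = lc c' → c = c' := fun h => by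
    have := hinj (a₁ := Sum.inr (Sum.inr _)) (a₂ := Sum.inr (Sum.inr _)) h
    simpa using this
  have K_adj : ∀ u v, G.Adj u v ↔ u ≠ v ∧ ∀ i, |vc u i - vc v i| ≤ 1 := by
    intro u v
    rw [hG, K, SimpleGraph.fromRel_adj]
    simp only [cube_inter_iff, ← hvc]
    constructor
    · rintro ⟨hne, h | h⟩
      · exact ⟨hne, h⟩
      · exact ⟨hne, fun i => by rw [abs_sub_comm]; exact h i⟩
    · rintro ⟨hne, h⟩; exact ⟨hne, Or.inl h⟩
  -- negative adjacency facts
  have nAQ : ∀ (a : A) (f : {e // e ∈ EBC}),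
      ¬ G.Adj (.inl a) (.inr (.inr (.inl f))) := by
    intro a f h
    rw [K_adj] at h
    exact sq_false (hlb f.1.1) h.2
  have nAC : ∀ (a : A) (c : C), ¬ G.Adj (.inl a) (.inr (.inr (.inr c))) := by
    intro a c h
    rw [K_adj] at h
    exact st_false h.2
  have nPC : ∀ (e : {e // e ∈ EAB}) (c : C),
      ¬ G.Adj (.inr (.inl e)) (.inr (.inr (.inr c))) := by
    intro e c h
    rw [K_adj] at h
    exact pt_false (hlb e.1.2) h.2
  have eAP : ∀ (a : A) (e : {e // e ∈ EAB}),
      G.Adj (.inl a) (.inr (.inl e)) → e.1.1 = a := by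
    intro a e h
    rw [K_adj] at h
    exact (hina (sp_eq h.2)).symm
  have ePQ : ∀ (e : {e // e ∈ EAB}) (f : {e // e ∈ EBC}),
      G.Adj (.inr (.inl e)) (.inr (.inr (.inl f))) → e.1.2 = f.1.1 := by
    intro e f h
    rw [K_adj] at h
    exact hinb (pq_eq h.2)
  have eQC : ∀ (f : {e // e ∈ EBC}) (c : C),
      G.Adj (.inr (.inr (.inl f))) (.inr (.inr (.inr c))) → f.1.2 = c := by
    intro f c h
    rw [K_adj] at h
    exact hinc (qt_eq h.2)
  -- positive adjacency facts
  have aAA : ∀ {a a' : A}, a ≠ a' → G.Adj (.inl a) (.inl a') := by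
    intro a a' hne
    rw [K_adj]
    exact ⟨by simpa using hne, ss_le (hla a) (hla a')⟩
  have aAP : ∀ (a : A) (e : {e // e ∈ EAB}), e.1.1 = a →
      G.Adj (.inl a) (.inr (.inl e)) := by
    intro a e he
    rw [K_adj]
    refine ⟨by simp, ?_⟩
    show ∀ i, |sC (la a) i - pC (la e.1.1) (lb e.1.2) i| ≤ 1
    rw [he]
    exact sp_le (hla a) (hlb e.1.2)
  have aPP : ∀ {e f : {e // e ∈ EAB}}, e ≠ f →
      G.Adj (.inr (.inl e)) (.inr (.inl f)) := by
    intro e f hne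
    rw [K_adj]
    exact ⟨by simpa using hne, pp_le (hla e.1.1) (hla f.1.1) (hlb e.1.2) (hlb f.1.2)⟩
  have aPQ : ∀ (e : {e // e ∈ EAB}) (f : {e // e ∈ EBC}), e.1.2 = f.1.1 →
      G.Adj (.inr (.inl e)) (.inr (.inr (.inl f))) := by
    intro e f he
    rw [K_adj]
    refine ⟨by simp, ?_⟩
    show ∀ i, |pC (la e.1.1) (lb e.1.2) i - qC (lb f.1.1) (lc f.1.2) i| ≤ 1
    rw [← he]
    exact pq_le (hla e.1.1) (hlc f.1.2) (hlb e.1.2)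
  have aQQ : ∀ {e f : {e // e ∈ EBC}}, e ≠ f →
      G.Adj (.inr (.inr (.inl e))) (.inr (.inr (.inl f))) := by
    intro e f hne
    rw [K_adj]
    exact ⟨by simpa using hne, qq_le (hlb e.1.1) (hlb f.1.1) (hlc e.1.2) (hlc f.1.2)⟩
  have aQC : ∀ (f : {e // e ∈ EBC}) (c : C), f.1.2 = c →
      G.Adj (.inr (.inr (.inl f))) (.inr (.inr (.inr c))) := by
    intro f c hf
    rw [K_adj]
    refine ⟨by simp, ?_⟩
    show ∀ i, |qC (lb f.1.1) (lc f.1.2) i - tC (lc c) i| ≤ 1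
    rw [hf]
    exact qt_le (hlb f.1.1) (hlc c)
  have aCC : ∀ {c c' : C}, c ≠ c' → G.Adj (.inr (.inr (.inr c))) (.inr (.inr (.inr c'))) := by
    intro c c' hne
    rw [K_adj]
    exact ⟨by simpa using hne, tt_le (hlc c) (hlc c')⟩
  constructor
  · -- dist ≤ 3 → Hall-type condition
    intro H a c
    have h3 := H (.inl a) (.inr (.inr (.inr c)))
    have hne : G.edist (.inl a) (.inr (.inr (.inr c))) ≠ ⊤ := by
      intro ht
      rw [ht] at h3
      exact absurd h3 (by simp)
    obtain ⟨w, hw⟩ := SimpleGraph.exists_walk_of_edist_ne_top hne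
    have hlen : w.length ≤ 3 := by
      have : (w.length : ℕ∞) ≤ 3 := hw ▸ h3
      exact_mod_cast this
    clear hw h3 hne H
    cases w with
    | cons h1 w1 =>
      rename_i v1
      cases w1 with
      | nil => exact absurd h1 (nAC a c)
      | cons h2 w2 =>
        rename_i v2
        cases w2 with
        | nil =>
          -- a ~ v1 ~ c
          rcases v1 with a1 | e1 | f1 | c1
          · exact absurd h2 (nAC a1 c)
          · exact absurd h2 (nPC e1 c)
          · exact absurd h1 (nAQ a f1)
          · exact absurd h1 (nAC a c1)
        | cons h3 w3 =>
          rename_i v3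
          cases w3 with
          | nil =>
            -- a ~ v1 ~ v2 ~ c
            rcases v1 with a1 | e1 | f1 | c1
            · rcases v2 with a2 | e2 | f2 | c2
              · exact absurd h3 (nAC a2 c)
              · exact absurd h3 (nPC e2 c)
              · exact absurd h2 (nAQ a1 f2)
              · exact absurd h2 (nAC a1 c2)
            · -- v1 = edge e1 ∈ EAB with e1.1.1 = a
              have hea : e1.1.1 = a := eAP a e1 h1
              rcases v2 with a2 | e2 | f2 | c2
              · exact absurd h3 (nAC a2 c)
              · exact absurd h3 (nPC e2 c)
              · -- the good case
                have heb : e1.1.2 = f2.1.1 := ePQ e1 f2 h2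
                have hfc : f2.1.2 = c := eQC f2 c h3
                refine ⟨e1.1.2, ?_, ?_⟩
                · have := e1.2
                  rwa [show e1.1 = (a, e1.1.2) from by
                    rw [← hea]] at this
                · have := f2.2
                  rwa [show f2.1 = (e1.1.2, c) from by
                    rw [← hfc, heb]] at this
              · exact absurd h2 (nPC e1 c2)
            · exact absurd h1 (nAQ a f1)
            · exact absurd h1 (nAC a c1)
          | cons h4 w4 =>
            simp only [SimpleGraph.Walk.length_cons] at hlen
            omega
  · -- Hall-type condition → dist ≤ 3
    intro H
    have le1 : ∀ {u v}, (u = v ∨ G.Adj u v) → G.edist u v ≤ 1 := by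
      rintro u v (rfl | h)
      · simp [SimpleGraph.edist_self]
      · exact le_of_eq (SimpleGraph.edist_eq_one_iff_adj.mpr h)
    have key3 : ∀ (u v w x), G.edist u v ≤ 1 → G.edist v w ≤ 1 → G.edist w x ≤ 1 →
        G.edist u x ≤ 3 := by
      intro u v w x h1 h2 h3
      calc G.edist u x ≤ G.edist u v + G.edist v x := G.edist_triangle
        _ ≤ G.edist u v + (G.edist v w + G.edist w x) := by
            exact add_le_add le_rfl G.edist_triangle
        _ ≤ 1 + (1 + 1) := by
            gcongr
        _ = 3 := by norm_num
    -- same-type edist ≤ 1 helpers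
    have sAA : ∀ (a a' : A), G.edist (.inl a) (.inl a') ≤ 1 := by
      intro a a'
      by_cases h : a = a'
      · exact le1 (Or.inl (by rw [h]))
      · exact le1 (Or.inr (aAA h))
    have sPP : ∀ (e f : {e // e ∈ EAB}), G.edist (.inr (.inl e)) (.inr (.inl f)) ≤ 1 := by
      intro e f
      by_cases h : e = f
      · exact le1 (Or.inl (by rw [h]))
      · exact le1 (Or.inr (aPP h))
    have sQQ : ∀ (e f : {e // e ∈ EBC}),
        G.edist (.inr (.inr (.inl e))) (.inr (.inr (.inl f))) ≤ 1 := by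
      intro e f
      by_cases h : e = f
      · exact le1 (Or.inl (by rw [h]))
      · exact le1 (Or.inr (aQQ h))
    have sCC : ∀ (c c' : C), G.edist (.inr (.inr (.inr c))) (.inr (.inr (.inr c'))) ≤ 1 := by
      intro c c'
      by_cases h : c = c'
      · exact le1 (Or.inl (by rw [h]))
      · exact le1 (Or.inr (aCC h))
    have dAP : ∀ (a : A) (e : {e // e ∈ EAB}), G.edist (.inl a) (.inr (.inl e)) ≤ 3 := by
      intro a e
      exact key3 _ (.inl e.1.1) (.inr (.inl e)) _ (sAA a e.1.1)
        (le1 (Or.inr (aAP e.1.1 e rfl))) (sPP e e)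
    have dAQ : ∀ (a : A) (f : {e // e ∈ EBC}),
        G.edist (.inl a) (.inr (.inr (.inl f))) ≤ 3 := by
      intro a f
      obtain ⟨b, hab, hbc⟩ := H a f.1.2
      exact key3 _ (.inr (.inl ⟨(a, b), hab⟩)) (.inr (.inr (.inl ⟨(b, f.1.2), hbc⟩))) _
        (le1 (Or.inr (aAP a ⟨(a, b), hab⟩ rfl)))
        (le1 (Or.inr (aPQ ⟨(a, b), hab⟩ ⟨(b, f.1.2), hbc⟩ rfl)))
        (sQQ _ f)
    have dAC : ∀ (a : A) (c : C), G.edist (.inl a) (.inr (.inr (.inr c))) ≤ 3 := by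
      intro a c
      obtain ⟨b, hab, hbc⟩ := H a c
      exact key3 _ (.inr (.inl ⟨(a, b), hab⟩)) (.inr (.inr (.inl ⟨(b, c), hbc⟩))) _
        (le1 (Or.inr (aAP a ⟨(a, b), hab⟩ rfl)))
        (le1 (Or.inr (aPQ ⟨(a, b), hab⟩ ⟨(b, c), hbc⟩ rfl)))
        (le1 (Or.inr (aQC ⟨(b, c), hbc⟩ c rfl)))
    have dPQ : ∀ (e : {e // e ∈ EAB}) (f : {e // e ∈ EBC}),
        G.edist (.inr (.inl e)) (.inr (.inr (.inl f))) ≤ 3 := by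
      intro e f
      obtain ⟨b, hab, hbc⟩ := H e.1.1 f.1.2
      exact key3 _ (.inr (.inl ⟨(e.1.1, b), hab⟩)) (.inr (.inr (.inl ⟨(b, f.1.2), hbc⟩))) _
        (sPP e _)
        (le1 (Or.inr (aPQ ⟨(e.1.1, b), hab⟩ ⟨(b, f.1.2), hbc⟩ rfl)))
        (sQQ _ f)
    have dPC : ∀ (e : {e // e ∈ EAB}) (c : C),
        G.edist (.inr (.inl e)) (.inr (.inr (.inr c))) ≤ 3 := by
      intro e c
      obtain ⟨b, hab, hbc⟩ := H e.1.1 c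
      exact key3 _ (.inr (.inl ⟨(e.1.1, b), hab⟩)) (.inr (.inr (.inl ⟨(b, c), hbc⟩))) _
        (sPP e _)
        (le1 (Or.inr (aPQ ⟨(e.1.1, b), hab⟩ ⟨(b, c), hbc⟩ rfl)))
        (le1 (Or.inr (aQC ⟨(b, c), hbc⟩ c rfl)))
    have dQC : ∀ (f : {e // e ∈ EBC}) (c : C),
        G.edist (.inr (.inr (.inl f))) (.inr (.inr (.inr c))) ≤ 3 := by
      intro f c
      exact key3 _ (.inr (.inr (.inr f.1.2))) (.inr (.inr (.inr c))) _
        (le1 (Or.inr (aQC f f.1.2 rfl))) (sCC f.1.2 c) (sCC c c)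
    intro u v
    rcases u with a | e | f | c <;> rcases v with a' | e' | f' | c'
    · exact (sAA a a').trans (by norm_num)
    · exact dAP a e'
    · exact dAQ a f'
    · exact dAC a c'
    · rw [SimpleGraph.edist_comm]; exact dAP a' e
    · exact (sPP e e').trans (by norm_num)
    · exact dPQ e f'
    · exact dPC e c'
    · rw [SimpleGraph.edist_comm]; exact dAQ a' f
    · rw [SimpleGraph.edist_comm]; exact dPQ e' f
    · exact (sQQ f f').trans (by norm_num)
    · exact dQC f c'
    · rw [SimpleGraph.edist_comm]; exact dAC a' c
    · rw [SimpleGraph.edist_comm]; exact dPC e' c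
    · rw [SimpleGraph.edist_comm]; exact dQC f' c
    · exact (sCC c c').trans (by norm_num)
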